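/- Let (ξ_1,...,ξ_n) be exchangeable real-valued random variables for each n (i.e., their joint law P_n is invariant under permutations), and suppose the law of large numbers holds: for every bounded measurable f, the average (1/n)∑_{j=1}^n f(ξ_j) converges in probability to a deterministic value μ(f). Then for any two bounded measurable functions f_1, f_2, E[f_1(ξ_1) f_2(ξ_2)] → μ(f_1)·μ(f_2) as n → ∞; i.e., ξ_1 and ξ_2 are asymptotically independent. -/

import Mathlib

open MeasureTheory Filter
open scoped ENNReal

-- existence of permutation sending 0↦i, 1↦j, fixing [n,∞)
lemma perm_exists {n i j : ℕ} (h2 : 2 ≤ n) (hi : i < n) (hj : j < n) (hij : i ≠ j) :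
    ∃ σ : Equiv.Perm ℕ, σ 0 = i ∧ σ 1 = j ∧ ∀ k, n ≤ k → σ k = k := by
  set j' := Equiv.swap 0 i j with hj'
  have hj'0 : j' ≠ 0 := by
    intro h
    have := (Equiv.swap 0 i).injective (a₁ := j) (a₂ := i) (by
      rw [Equiv.swap_apply_right]; rw [← hj'] ; exact h)
    exact hij this.symm
  refine ⟨Equiv.swap 0 i * Equiv.swap 1 j', ?_, ?_, ?_⟩
  · have h0 : Equiv.swap 1 j' 0 = 0 :=
      Equiv.swap_apply_of_ne_of_ne (by norm_num) (Ne.symm hj'0)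
    simp [Equiv.Perm.mul_apply, h0, Equiv.swap_apply_left]
  · simp [Equiv.Perm.mul_apply, Equiv.swap_apply_left, hj', Equiv.swap_apply_self]
  · intro k hk
    have hk0 : k ≠ 0 := by omega
    have hki : k ≠ i := by omega
    have hk1 : k ≠ 1 := by omega
    have hkj' : k ≠ j' := by
      have : j' = 0 ∨ j' = i ∨ j' = j := by
        rw [hj']; rcases Equiv.swap_apply_def 0 i j with _
        by_cases h1 : j = 0
        · simp [h1]
        · by_cases h3 : j = i
          · simp [h3]
          · right; right; rw [Equiv.swap_apply_of_ne_of_ne h1 h3]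
      rcases this with h | h | h <;> omega
    simp [Equiv.Perm.mul_apply, Equiv.swap_apply_of_ne_of_ne hk1 hkj',
      Equiv.swap_apply_of_ne_of_ne hk0 hki]

lemma int_bdd {P : Measure (ℕ → ℝ)} [IsProbabilityMeasure P] {g : (ℕ → ℝ) → ℝ}
    (hg : Measurable g) {C : ℝ} (hC : ∀ x, |g x| ≤ C) : Integrable g P := by
  refine Integrable.mono' (integrable_const C) hg.aestronglyMeasurable ?_
  exact ae_of_all _ fun x => by simpa [Real.norm_eq_abs] using hC x

lemma abs_integral_le {P : Measure (ℕ → ℝ)} [IsProbabilityMeasure P] {g : (ℕ → ℝ) → ℝ}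
    (hg : Measurable g) {C : ℝ} (hC : ∀ x, |g x| ≤ C) : |∫ x, g x ∂P| ≤ C := by
  calc |∫ x, g x ∂P| ≤ ∫ x, |g x| ∂P := by
        simpa [Real.norm_eq_abs] using norm_integral_le_integral_norm (μ := P) g
    _ ≤ ∫ _x, C ∂P := integral_mono ((int_bdd hg hC).abs) (integrable_const C)
        (fun x => hC x)
    _ = C := by simp

lemma map_integral_pair {P : Measure (ℕ → ℝ)} {n : ℕ}
    (h : ∀ σ : Equiv.Perm ℕ, (∀ i, n ≤ i → σ i = i) →
      Measure.map (fun x => x ∘ σ) P = P)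
    {g₁ g₂ : ℝ → ℝ} (hg₁ : Measurable g₁) (hg₂ : Measurable g₂)
    {i j : ℕ} (h2 : 2 ≤ n) (hi : i < n) (hj : j < n) (hij : i ≠ j) :
    ∫ x, g₁ (x i) * g₂ (x j) ∂P = ∫ x, g₁ (x 0) * g₂ (x 1) ∂P := by
  obtain ⟨σ, hσ0, hσ1, hσfix⟩ := perm_exists h2 hi hj hij
  have hT : Measurable (fun x : ℕ → ℝ => x ∘ σ) :=
    measurable_pi_lambda _ fun k => measurable_pi_apply _
  have hmeas : Measurable fun x : ℕ → ℝ => g₁ (x 0) * g₂ (x 1) :=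
    (hg₁.comp (measurable_pi_apply 0)).mul (hg₂.comp (measurable_pi_apply 1))
  calc ∫ x, g₁ (x i) * g₂ (x j) ∂P
      = ∫ x, g₁ ((x ∘ σ) 0) * g₂ ((x ∘ σ) 1) ∂P := by
        simp only [Function.comp_apply, hσ0, hσ1]
    _ = ∫ x, g₁ (x 0) * g₂ (x 1) ∂(Measure.map (fun x => x ∘ σ) P) :=
        (integral_map hT.aemeasurable hmeas.aestronglyMeasurable).symm
    _ = ∫ x, g₁ (x 0) * g₂ (x 1) ∂P := by rw [h σ hσfix]

lemma map_integral_diag {P : Measure (ℕ → ℝ)} {n : ℕ}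
    (h : ∀ σ : Equiv.Perm ℕ, (∀ i, n ≤ i → σ i = i) →
      Measure.map (fun x => x ∘ σ) P = P)
    {g : ℝ → ℝ} (hg : Measurable g) {i : ℕ} (hi : i < n) :
    ∫ x, g (x i) ∂P = ∫ x, g (x 0) ∂P := by
  have hσfix : ∀ k, n ≤ k → (Equiv.swap 0 i) k = k := by
    intro k hk
    exact Equiv.swap_apply_of_ne_of_ne (by omega) (by omega)
  have hT : Measurable (fun x : ℕ → ℝ => x ∘ (Equiv.swap 0 i)) :=
    measurable_pi_lambda _ fun k => measurable_pi_apply _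
  have hmeas : Measurable fun x : ℕ → ℝ => g (x 0) :=
    hg.comp (measurable_pi_apply 0)
  calc ∫ x, g (x i) ∂P
      = ∫ x, g ((x ∘ (Equiv.swap 0 i)) 0) ∂P := by
        simp only [Function.comp_apply, Equiv.swap_apply_left]
    _ = ∫ x, g (x 0) ∂(Measure.map (fun x => x ∘ (Equiv.swap 0 i)) P) :=
        (integral_map hT.aemeasurable hmeas.aestronglyMeasurable).symm
    _ = ∫ x, g (x 0) ∂P := by rw [h _ hσfix]

-- L¹ bound via a probability of deviation
lemma l1_bound {P : Measure (ℕ → ℝ)} [IsProbabilityMeasure P] {Y : (ℕ → ℝ) → ℝ}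
    (hY : Measurable Y) {M : ℝ} (hYb : ∀ x, |Y x| ≤ M) {m : ℝ} (hm : |m| ≤ M)
    {ε : ℝ} (hε : 0 < ε) :
    ∫ x, |Y x - m| ∂P ≤ ε + 2 * M * (P {x | ε ≤ |Y x - m|}).toReal := by
  set s := {x | ε ≤ |Y x - m|} with hs
  have hsm : MeasurableSet s :=
    measurableSet_le measurable_const (hY.sub measurable_const).abs
  have hint1 : Integrable (fun x => |Y x - m|) P :=
    int_bdd (hY.sub measurable_const).abs (C := M + |m|) fun x => by
      rw [abs_abs]
      exact (abs_sub _ _).trans (add_le_add (hYb x) le_rfl)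
  have hind : Integrable (s.indicator fun _ => 2 * M) P :=
    (integrable_const (2 * M)).indicator hsm
  have hpt : ∀ x, |Y x - m| ≤ ε + s.indicator (fun _ => 2 * M) x := by
    intro x
    by_cases hx : x ∈ s
    · rw [Set.indicator_of_mem hx]
      have : |Y x - m| ≤ 2 * M := (abs_sub _ _).trans (by linarith [hYb x])
      linarith
    · rw [Set.indicator_of_notMem hx]
      simp only [hs, Set.mem_setOf_eq, not_le] at hx
      linarith
  calc ∫ x, |Y x - m| ∂P ≤ ∫ x, (ε + s.indicator (fun _ => 2 * M) x) ∂P :=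
        integral_mono hint1 ((integrable_const ε).add hind) hpt
    _ = ε + 2 * M * (P s).toReal := by
        rw [integral_add (integrable_const ε) hind, integral_const,
          integral_indicator_const _ hsm]
        simp [mul_comm, measureReal_def]

lemma avg_abs_le {f : ℝ → ℝ} {C : ℝ} (hC : ∀ x, |f x| ≤ C) (n : ℕ) (x : ℕ → ℝ) :
    |(n : ℝ)⁻¹ * ∑ j ∈ Finset.range n, f (x j)| ≤ C := by
  have hC0 : 0 ≤ C := (abs_nonneg _).trans (hC 0)
  rcases Nat.eq_zero_or_pos n with hn | hn
  · simp [hn, hC0]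
  have hsum : |∑ j ∈ Finset.range n, f (x j)| ≤ n * C := by
    calc |∑ j ∈ Finset.range n, f (x j)| ≤ ∑ j ∈ Finset.range n, |f (x j)| :=
          Finset.abs_sum_le_sum_abs _ _
      _ ≤ ∑ _j ∈ Finset.range n, C := Finset.sum_le_sum fun j _ => hC _
      _ = n * C := by simp [mul_comm]
  rw [abs_mul, abs_inv, Nat.abs_cast]
  have hn' : (0 : ℝ) < n := by exact_mod_cast hn
  rw [inv_mul_le_iff₀ hn']
  exact hsum

lemma mu_abs_le (P : ℕ → Measure (ℕ → ℝ)) (hP : ∀ n, IsProbabilityMeasure (P n))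
    {f : ℝ → ℝ} {C m : ℝ} (hC : ∀ x, |f x| ≤ C)
    (h : ∀ ε : ℝ, 0 < ε →
      Tendsto (fun n => P n {x | ε ≤ |(n : ℝ)⁻¹ * ∑ j ∈ Finset.range n, f (x j) - m|})
        atTop (nhds 0)) : |m| ≤ C := by
  by_contra hcon
  push_neg at hcon
  set ε := |m| - C with hε
  have hεpos : 0 < ε := by linarith
  have huniv : ∀ n : ℕ, {x : ℕ → ℝ | ε ≤ |(n : ℝ)⁻¹ * ∑ j ∈ Finset.range n, f (x j) - m|}
      = Set.univ := by
    intro n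
    ext x
    simp only [Set.mem_setOf_eq, Set.mem_univ, iff_true]
    have h1 := avg_abs_le hC n x
    have h2 : |m| - |(n : ℝ)⁻¹ * ∑ j ∈ Finset.range n, f (x j)| ≤
        |(n : ℝ)⁻¹ * ∑ j ∈ Finset.range n, f (x j) - m| := by
      rw [abs_sub_comm]
      linarith [abs_sub_abs_le_abs_sub m ((n : ℝ)⁻¹ * ∑ j ∈ Finset.range n, f (x j))]
    linarith
  have htend := h ε hεpos
  have heq : (fun n => P n {x | ε ≤ |(n : ℝ)⁻¹ * ∑ j ∈ Finset.range n, f (x j) - m|})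
      = fun _ => (1 : ℝ≥0∞) := by
    funext n
    rw [huniv n]
    have := hP n
    simp
  rw [heq] at htend
  exact absurd (tendsto_nhds_unique htend tendsto_const_nhds) (by simp)

lemma sum_expand {P : Measure (ℕ → ℝ)} [IsProbabilityMeasure P] {n : ℕ}
    (h : ∀ σ : Equiv.Perm ℕ, (∀ i, n ≤ i → σ i = i) →
      Measure.map (fun x => x ∘ σ) P = P)
    {f₁ f₂ : ℝ → ℝ} (hf₁ : Measurable f₁) (hf₂ : Measurable f₂)
    {C₁ C₂ : ℝ} (hC₁ : ∀ x, |f₁ x| ≤ C₁) (hC₂ : ∀ x, |f₂ x| ≤ C₂)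
    (h2 : 2 ≤ n) :
    ∫ x, (∑ i ∈ Finset.range n, f₁ (x i)) * (∑ j ∈ Finset.range n, f₂ (x j)) ∂P
      = ((n : ℝ) * n - n) * (∫ x, f₁ (x 0) * f₂ (x 1) ∂P)
        + n * (∫ x, f₁ (x 0) * f₂ (x 0) ∂P) := by
  have hC₁0 : 0 ≤ C₁ := (abs_nonneg _).trans (hC₁ 0)
  have hI : ∀ i j : ℕ, Integrable (fun x : ℕ → ℝ => f₁ (x i) * f₂ (x j)) P := by
    intro i j
    refine int_bdd ((hf₁.comp (measurable_pi_apply i)).mul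
      (hf₂.comp (measurable_pi_apply j))) (C := C₁ * C₂) fun x => ?_
    rw [abs_mul]
    exact mul_le_mul (hC₁ _) (hC₂ _) (abs_nonneg _) hC₁0
  set A := ∫ x, f₁ (x 0) * f₂ (x 1) ∂P with hA
  set B := ∫ x, f₁ (x 0) * f₂ (x 0) ∂P with hB
  have hval : ∀ i ∈ Finset.range n, ∀ j ∈ Finset.range n,
      ∫ x, f₁ (x i) * f₂ (x j) ∂P = if i = j then B else A := by
    intro i hi j hj
    rw [Finset.mem_range] at hi hj
    by_cases hij : i = j
    · rw [if_pos hij, hij, hB]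
      exact map_integral_diag h (hf₁.mul hf₂) hj
    · rw [if_neg hij, hA]
      exact map_integral_pair h hf₁ hf₂ h2 hi hj hij
  calc ∫ x, (∑ i ∈ Finset.range n, f₁ (x i)) * (∑ j ∈ Finset.range n, f₂ (x j)) ∂P
      = ∫ x, ∑ i ∈ Finset.range n, ∑ j ∈ Finset.range n, f₁ (x i) * f₂ (x j) ∂P := by
        congr 1; funext x; rw [Finset.sum_mul_sum]
    _ = ∑ i ∈ Finset.range n, ∑ j ∈ Finset.range n, ∫ x, f₁ (x i) * f₂ (x j) ∂P := by
        rw [integral_finset_sum _ fun i _ => integrable_finset_sum _ fun j _ => hI i j]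
        exact Finset.sum_congr rfl fun i _ => integral_finset_sum _ fun j _ => hI i j
    _ = ∑ i ∈ Finset.range n, ∑ j ∈ Finset.range n, (if i = j then B else A) :=
        Finset.sum_congr rfl fun i hi => Finset.sum_congr rfl fun j hj => hval i hi j hj
    _ = ∑ i ∈ Finset.range n, ((n : ℝ) * A + (B - A)) := by
        refine Finset.sum_congr rfl fun i hi => ?_
        have : ∀ j ∈ Finset.range n, (if i = j then B else A)
            = A + (if i = j then B - A else 0) := fun j _ => by split_ifs <;> ring
        rw [Finset.sum_congr rfl this, Finset.sum_add_distrib, Finset.sum_const,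
          Finset.sum_ite_eq, if_pos hi]
        simp [mul_comm]
    _ = ((n : ℝ) * n - n) * A + n * B := by
        rw [Finset.sum_const]
        simp only [Finset.card_range, nsmul_eq_mul]
        ring

lemma core_estimate {P : Measure (ℕ → ℝ)} [IsProbabilityMeasure P] {n : ℕ} (h2 : 2 ≤ n)
    (h : ∀ σ : Equiv.Perm ℕ, (∀ i, n ≤ i → σ i = i) →
      Measure.map (fun x => x ∘ σ) P = P)
    {f₁ f₂ : ℝ → ℝ} (hf₁ : Measurable f₁) (hf₂ : Measurable f₂)
    {C₁ C₂ : ℝ} (hC₁ : ∀ x, |f₁ x| ≤ C₁) (hC₂ : ∀ x, |f₂ x| ≤ C₂)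
    {m₁ m₂ : ℝ} (hm₁ : |m₁| ≤ C₁) (hm₂ : |m₂| ≤ C₂) {ε : ℝ} (hε : 0 < ε) :
    |(∫ x, f₁ (x 0) * f₂ (x 1) ∂P) - m₁ * m₂| ≤
      2 * (C₁ * C₂) / n + (C₁ + C₂) * ε
      + 2 * (C₁ * C₂) *
        ((P {x | ε ≤ |(n : ℝ)⁻¹ * ∑ j ∈ Finset.range n, f₁ (x j) - m₁|}).toReal
          + (P {x | ε ≤ |(n : ℝ)⁻¹ * ∑ j ∈ Finset.range n, f₂ (x j) - m₂|}).toReal) := by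
  have hC₁0 : 0 ≤ C₁ := (abs_nonneg _).trans (hC₁ 0)
  have hC₂0 : 0 ≤ C₂ := (abs_nonneg _).trans (hC₂ 0)
  have hn0 : (0 : ℝ) < n := by exact_mod_cast (by omega : 0 < n)
  -- the averages
  have hY₁m : Measurable fun x : ℕ → ℝ => (n : ℝ)⁻¹ * ∑ j ∈ Finset.range n, f₁ (x j) :=
    (Finset.measurable_sum _ fun j _ => hf₁.comp (measurable_pi_apply j)).const_mul _
  have hY₂m : Measurable fun x : ℕ → ℝ => (n : ℝ)⁻¹ * ∑ j ∈ Finset.range n, f₂ (x j) :=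
    (Finset.measurable_sum _ fun j _ => hf₂.comp (measurable_pi_apply j)).const_mul _
  have hY₁b := fun x => avg_abs_le hC₁ n x
  have hY₂b := fun x => avg_abs_le hC₂ n x
  set Y₁ : (ℕ → ℝ) → ℝ := fun x => (n : ℝ)⁻¹ * ∑ j ∈ Finset.range n, f₁ (x j) with hY₁def
  set Y₂ : (ℕ → ℝ) → ℝ := fun x => (n : ℝ)⁻¹ * ∑ j ∈ Finset.range n, f₂ (x j) with hY₂def
  set A := ∫ x, f₁ (x 0) * f₂ (x 1) ∂P with hAdef
  set B := ∫ x, f₁ (x 0) * f₂ (x 0) ∂P with hBdef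
  set q₁ := (P {x | ε ≤ |Y₁ x - m₁|}).toReal with hq₁def
  set q₂ := (P {x | ε ≤ |Y₂ x - m₂|}).toReal with hq₂def
  have E₁ : ∫ x, |Y₁ x - m₁| ∂P ≤ ε + 2 * C₁ * q₁ := l1_bound hY₁m hY₁b hm₁ hε
  have E₂ : ∫ x, |Y₂ x - m₂| ∂P ≤ ε + 2 * C₂ * q₂ := l1_bound hY₂m hY₂b hm₂ hε
  -- bounds on A and B
  have hA : |A| ≤ C₁ * C₂ := abs_integral_le
    ((hf₁.comp (measurable_pi_apply 0)).mul (hf₂.comp (measurable_pi_apply 1)))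
    fun x => by rw [Pi.mul_apply, abs_mul]; exact mul_le_mul (hC₁ _) (hC₂ _) (abs_nonneg _) hC₁0
  have hB : |B| ≤ C₁ * C₂ := abs_integral_le
    ((hf₁.comp (measurable_pi_apply 0)).mul (hf₂.comp (measurable_pi_apply 0)))
    fun x => by rw [Pi.mul_apply, abs_mul]; exact mul_le_mul (hC₁ _) (hC₂ _) (abs_nonneg _) hC₁0
  -- the product expansion
  have hprod : ∫ x, Y₁ x * Y₂ x ∂P = A - A / n + B / n := by
    have heq : (fun x => Y₁ x * Y₂ x) = fun x => (n : ℝ)⁻¹ * ((n : ℝ)⁻¹ *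
        ((∑ i ∈ Finset.range n, f₁ (x i)) * (∑ j ∈ Finset.range n, f₂ (x j)))) := by
      funext x; simp only [hY₁def, hY₂def]; ring
    rw [heq, integral_const_mul, integral_const_mul,
      sum_expand h hf₁ hf₂ hC₁ hC₂ h2, ← hAdef, ← hBdef]
    field_simp
  -- first term
  have hterm1 : |A - ∫ x, Y₁ x * Y₂ x ∂P| ≤ 2 * (C₁ * C₂) / n := by
    rw [hprod]
    have : A - (A - A / n + B / n) = (A - B) / n := by ring
    rw [this, abs_div, abs_of_pos hn0]
    gcongr
    calc |A - B| ≤ |A| + |B| := abs_sub _ _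
      _ ≤ 2 * (C₁ * C₂) := by linarith
  -- second term
  have hIY : Integrable (fun x => Y₁ x * Y₂ x) P :=
    int_bdd (hY₁m.mul hY₂m) (C := C₁ * C₂) fun x => by
      rw [abs_mul]; exact mul_le_mul (hY₁b x) (hY₂b x) (abs_nonneg _) hC₁0
  have hI₁ : Integrable (fun x => |Y₁ x - m₁|) P :=
    int_bdd (hY₁m.sub measurable_const).abs (C := 2 * C₁) fun x => by
      rw [abs_abs]; exact (abs_sub _ _).trans (by linarith [hY₁b x])
  have hI₂ : Integrable (fun x => |Y₂ x - m₂|) P :=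
    int_bdd (hY₂m.sub measurable_const).abs (C := 2 * C₂) fun x => by
      rw [abs_abs]; exact (abs_sub _ _).trans (by linarith [hY₂b x])
  have hterm2 : |(∫ x, Y₁ x * Y₂ x ∂P) - m₁ * m₂| ≤
      C₁ * (∫ x, |Y₂ x - m₂| ∂P) + C₂ * (∫ x, |Y₁ x - m₁| ∂P) := by
    have heq : (∫ x, Y₁ x * Y₂ x ∂P) - m₁ * m₂
        = ∫ x, (Y₁ x * Y₂ x - m₁ * m₂) ∂P := by
      rw [integral_sub hIY (integrable_const _), integral_const]
      simp
    rw [heq]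
    have hpt : ∀ x, |Y₁ x * Y₂ x - m₁ * m₂| ≤
        C₁ * |Y₂ x - m₂| + C₂ * |Y₁ x - m₁| := by
      intro x
      have heq2 : Y₁ x * Y₂ x - m₁ * m₂ = Y₁ x * (Y₂ x - m₂) + (Y₁ x - m₁) * m₂ := by
        ring
      rw [heq2]
      calc |Y₁ x * (Y₂ x - m₂) + (Y₁ x - m₁) * m₂|
          ≤ |Y₁ x * (Y₂ x - m₂)| + |(Y₁ x - m₁) * m₂| := abs_add_le _ _
        _ ≤ C₁ * |Y₂ x - m₂| + C₂ * |Y₁ x - m₁| := by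
            have e1 : |Y₁ x * (Y₂ x - m₂)| = |Y₁ x| * |Y₂ x - m₂| := abs_mul _ _
            have e2 : |(Y₁ x - m₁) * m₂| = |Y₁ x - m₁| * |m₂| := abs_mul _ _
            have h1 : |Y₁ x| * |Y₂ x - m₂| ≤ C₁ * |Y₂ x - m₂| :=
              mul_le_mul_of_nonneg_right (hY₁b x) (abs_nonneg _)
            have h2 : |Y₁ x - m₁| * |m₂| ≤ |Y₁ x - m₁| * C₂ :=
              mul_le_mul_of_nonneg_left hm₂ (abs_nonneg _)
            have h3 : |Y₁ x - m₁| * C₂ = C₂ * |Y₁ x - m₁| := mul_comm _ _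
            linarith
    calc |∫ x, (Y₁ x * Y₂ x - m₁ * m₂) ∂P|
        ≤ ∫ x, |Y₁ x * Y₂ x - m₁ * m₂| ∂P := by
          simpa [Real.norm_eq_abs] using
            norm_integral_le_integral_norm (μ := P) fun x => Y₁ x * Y₂ x - m₁ * m₂
      _ ≤ ∫ x, (C₁ * |Y₂ x - m₂| + C₂ * |Y₁ x - m₁|) ∂P := by
          refine integral_mono ?_ ((hI₂.const_mul C₁).add (hI₁.const_mul C₂)) hpt
          exact (hIY.sub (integrable_const _)).abs
      _ = C₁ * (∫ x, |Y₂ x - m₂| ∂P) + C₂ * (∫ x, |Y₁ x - m₁| ∂P) := by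
          rw [integral_add (hI₂.const_mul C₁) (hI₁.const_mul C₂),
            integral_const_mul, integral_const_mul]
  -- combine
  have htri : |A - m₁ * m₂| ≤ |A - ∫ x, Y₁ x * Y₂ x ∂P|
      + |(∫ x, Y₁ x * Y₂ x ∂P) - m₁ * m₂| := abs_sub_le _ _ _
  have hE₁' : C₂ * (∫ x, |Y₁ x - m₁| ∂P) ≤ C₂ * (ε + 2 * C₁ * q₁) :=
    mul_le_mul_of_nonneg_left E₁ hC₂0
  have hE₂' : C₁ * (∫ x, |Y₂ x - m₂| ∂P) ≤ C₁ * (ε + 2 * C₂ * q₂) :=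
    mul_le_mul_of_nonneg_left E₂ hC₁0
  have hfinal : C₂ * (ε + 2 * C₁ * q₁) + C₁ * (ε + 2 * C₂ * q₂)
      = (C₁ + C₂) * ε + 2 * (C₁ * C₂) * (q₁ + q₂) := by ring
  linarith


/-- For exchangeable random variables satisfying the law of large numbers,
`E[f₁(ξ₁) f₂(ξ₂)] → μ(f₁)·μ(f₂)`: the first two coordinates are asymptotically
independent.  Here `P n` is the joint law of `(ξ₁,...,ξ_n)`, realized as a measure on
sequences whose coordinates beyond `n` are irrelevant. -/
theorem asymptotic_independence_two
    (P : ℕ → Measure (ℕ → ℝ)) (hP : ∀ n, IsProbabilityMeasure (P n))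
    (hexch : ∀ n, ∀ σ : Equiv.Perm ℕ, (∀ i, n ≤ i → σ i = i) →
      Measure.map (fun x => x ∘ σ) (P n) = P n)
    (μ : (ℝ → ℝ) → ℝ)
    (hLLN : ∀ f : ℝ → ℝ, Measurable f → (∃ C, ∀ x, |f x| ≤ C) → ∀ ε : ℝ, 0 < ε →
      Tendsto (fun n => P n {x | ε ≤ |(n : ℝ)⁻¹ * ∑ j ∈ Finset.range n, f (x j) - μ f|})
        atTop (nhds 0))
    (f₁ f₂ : ℝ → ℝ) (hf₁ : Measurable f₁) (hf₂ : Measurable f₂)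
    (hb₁ : ∃ C, ∀ x, |f₁ x| ≤ C) (hb₂ : ∃ C, ∀ x, |f₂ x| ≤ C) :
    Tendsto (fun n => ∫ x, f₁ (x 0) * f₂ (x 1) ∂ P n) atTop (nhds (μ f₁ * μ f₂)) := by
  obtain ⟨C₁, hC₁⟩ := hb₁
  obtain ⟨C₂, hC₂⟩ := hb₂
  have hC₁0 : 0 ≤ C₁ := (abs_nonneg _).trans (hC₁ 0)
  have hC₂0 : 0 ≤ C₂ := (abs_nonneg _).trans (hC₂ 0)
  have hm₁ : |μ f₁| ≤ C₁ := mu_abs_le P hP hC₁ (hLLN f₁ hf₁ ⟨C₁, hC₁⟩)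
  have hm₂ : |μ f₂| ≤ C₂ := mu_abs_le P hP hC₂ (hLLN f₂ hf₂ ⟨C₂, hC₂⟩)
  rw [Metric.tendsto_nhds]
  intro δ hδ
  set K := C₁ + C₂ + 2 * (C₁ * C₂) + 1 with hK
  have hK1 : 1 ≤ K := by nlinarith [mul_nonneg hC₁0 hC₂0]
  have hKpos : 0 < K := by linarith
  set ε := δ / (2 * K) with hεdef
  have hεpos : 0 < ε := by positivity
  have h1 : Tendsto (fun n : ℕ => 2 * (C₁ * C₂) / n) atTop (nhds 0) :=
    tendsto_const_div_atTop_nhds_zero_nat _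
  have h2 : Tendsto (fun n =>
      (P n {x | ε ≤ |(n : ℝ)⁻¹ * ∑ j ∈ Finset.range n, f₁ (x j) - μ f₁|}).toReal)
      atTop (nhds 0) := by
    have ht := hLLN f₁ hf₁ ⟨C₁, hC₁⟩ ε hεpos
    have := (ENNReal.tendsto_toReal (a := 0) (by simp)).comp ht
    simpa [Function.comp_def] using this
  have h3 : Tendsto (fun n =>
      (P n {x | ε ≤ |(n : ℝ)⁻¹ * ∑ j ∈ Finset.range n, f₂ (x j) - μ f₂|}).toReal)
      atTop (nhds 0) := by
    have ht := hLLN f₂ hf₂ ⟨C₂, hC₂⟩ ε hεpos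
    have := (ENNReal.tendsto_toReal (a := 0) (by simp)).comp ht
    simpa [Function.comp_def] using this
  have hsum : Tendsto (fun n : ℕ =>
      2 * (C₁ * C₂) / n + (C₁ + C₂) * ε
        + 2 * (C₁ * C₂) *
          ((P n {x | ε ≤ |(n : ℝ)⁻¹ * ∑ j ∈ Finset.range n, f₁ (x j) - μ f₁|}).toReal
            + (P n {x | ε ≤ |(n : ℝ)⁻¹ * ∑ j ∈ Finset.range n, f₂ (x j) - μ f₂|}).toReal))
      atTop (nhds ((C₁ + C₂) * ε)) := by
    have hc : Tendsto (fun _ : ℕ => (C₁ + C₂) * ε) atTop (nhds ((C₁ + C₂) * ε)) :=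
      tendsto_const_nhds
    have := (h1.add hc).add ((h2.add h3).const_mul (2 * (C₁ * C₂)))
    simpa using this
  have hlt : (C₁ + C₂) * ε < K * ε := by
    have : 0 < (2 * (C₁ * C₂) + 1) * ε := by positivity
    nlinarith
  have hev1 := hsum.eventually_lt_const hlt
  filter_upwards [hev1, eventually_ge_atTop 2] with n hb hn
  rw [Real.dist_eq]
  haveI := hP n
  calc |(∫ x, f₁ (x 0) * f₂ (x 1) ∂ P n) - μ f₁ * μ f₂|
      ≤ 2 * (C₁ * C₂) / n + (C₁ + C₂) * ε
        + 2 * (C₁ * C₂) *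
          ((P n {x | ε ≤ |(n : ℝ)⁻¹ * ∑ j ∈ Finset.range n, f₁ (x j) - μ f₁|}).toReal
            + (P n {x | ε ≤ |(n : ℝ)⁻¹ * ∑ j ∈ Finset.range n, f₂ (x j) - μ f₂|}).toReal) :=
        core_estimate hn (hexch n) hf₁ hf₂ hC₁ hC₂ hm₁ hm₂ hεpos
    _ < K * ε := hb
    _ = δ / 2 := by rw [hεdef]; field_simp
    _ < δ := by linarith
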